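/- Define W(x) = [ 3·(1 + √(1 − 4x/27))^{2/3} − 2^{2/3}·x^{1/3} ] / ( 2^{4/3}·3^{1/2}·π·x^{2/3}·(1 + √(1 − 4x/27))^{1/3} ) for x ∈ (0, 27/4). Then W(x) ≥ 0 on (0, 27/4) and for every natural number m, ∫₀^{27/4} x^m · W(x) dx = A_m(3, 1) = binom(3m+1, m) / (3m+1). -/

import Mathlib

open Real
open MeasureTheory

/-- The Raney numbers (two-parameter Fuss–Catalan numbers):
`A 0 (p,r) = 1` and `A m (p,r) = (r/m!)·∏_{i=1}^{m−1} (m·p + r − i)` for `m ≥ 1`. -/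
noncomputable def raney (p r : ℝ) : ℕ → ℝ
  | 0 => 1
  | (m + 1) => (r / (Nat.factorial (m + 1) : ℝ)) *
      ∏ i ∈ Finset.Icc 1 m, (((m : ℝ) + 1) * p + r - (i : ℝ))

lemma cEqOn (p q : ℝ) : ∀ x ∈ Set.uIcc (0:ℝ) 1,
    ((x ^ (p-1) * (1-x) ^ (q-1) : ℝ) : ℂ) = (x:ℂ) ^ ((p:ℂ) - 1) * (1 - (x:ℂ)) ^ ((q:ℂ) - 1) := by
  intro x hx
  rw [Set.uIcc_of_le (by norm_num)] at hx
  push_cast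
  rw [Complex.ofReal_cpow hx.1, Complex.ofReal_cpow (by linarith [hx.2])]
  push_cast
  ring_nf

lemma betaReal {p q : ℝ} (hp : 0 < p) (hq : 0 < q) :
    ∫ w in Set.Ioo (0:ℝ) 1, w ^ (p-1) * (1-w) ^ (q-1)
      = Real.Gamma p * Real.Gamma q / Real.Gamma (p+q) := by
  have h1 : ((∫ x in (0:ℝ)..1, x ^ (p-1) * (1-x) ^ (q-1) : ℝ) : ℂ)
      = Complex.betaIntegral p q := by
    rw [← intervalIntegral.integral_ofReal, Complex.betaIntegral]
    exact intervalIntegral.integral_congr (cEqOn p q)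
  have h2 := Complex.Gamma_mul_Gamma_eq_betaIntegral (s := (p:ℂ)) (t := (q:ℂ))
    (by simpa using hp) (by simpa using hq)
  rw [← h1, ← Complex.ofReal_add, Complex.Gamma_ofReal, Complex.Gamma_ofReal,
    Complex.Gamma_ofReal, ← Complex.ofReal_mul, ← Complex.ofReal_mul] at h2
  have h3 : Real.Gamma p * Real.Gamma q
      = Real.Gamma (p+q) * ∫ x in (0:ℝ)..1, x ^ (p-1) * (1-x) ^ (q-1) :=
    Complex.ofReal_injective h2
  have hG : Real.Gamma (p+q) ≠ 0 := (Real.Gamma_pos_of_pos (by linarith)).ne'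
  rw [eq_div_iff hG]
  rw [intervalIntegral.integral_of_le (by norm_num : (0:ℝ) ≤ 1),
    MeasureTheory.integral_Ioc_eq_integral_Ioo] at h3
  linarith [h3]

lemma betaIntegrable {p q : ℝ} (hp : 0 < p) (hq : 0 < q) :
    IntegrableOn (fun w => w ^ (p-1) * (1-w) ^ (q-1)) (Set.Ioo (0:ℝ) 1) := by
  have hc := Complex.betaIntegral_convergent (u := (p:ℂ)) (v := (q:ℂ))
    (by simpa using hp) (by simpa using hq)
  rw [intervalIntegrable_iff_integrableOn_Ioc_of_le (by norm_num)] at hc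
  have h4 : IntegrableOn (fun x : ℝ => Complex.re ((x:ℂ) ^ ((p:ℂ) - 1) * (1 - (x:ℂ)) ^ ((q:ℂ) - 1)))
      (Set.Ioc (0:ℝ) 1) := hc.re
  refine ((h4.mono_set Set.Ioo_subset_Ioc_self).congr_fun ?_ measurableSet_Ioo)
  intro x hx
  have := cEqOn p q x (by rw [Set.uIcc_of_le (by norm_num)]; exact ⟨hx.1.le, hx.2.le⟩)
  simp [Function.comp, ← this]

lemma prodRange : ∀ (n j : ℕ), (∏ k ∈ Finset.range n, ((j:ℝ) + n - k))
    = (Nat.factorial (j+n) : ℝ) / (Nat.factorial j) := by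
  intro n
  induction n with
  | zero =>
    intro j
    have : (Nat.factorial j : ℝ) ≠ 0 := by positivity
    simp [div_self this]
  | succ n ih =>
    intro j
    rw [Finset.prod_range_succ]
    have h1 : ∀ k ∈ Finset.range n, ((j:ℝ) + ((n+1:ℕ):ℝ) - (k:ℝ)) = ((j+1:ℕ):ℝ) + (n:ℝ) - (k:ℝ) := by
      intro k _; push_cast; ring
    rw [Finset.prod_congr rfl h1, ih (j+1)]
    have h3 : (j+1+n) = (j + (n+1)) := by omega
    rw [h3, Nat.factorial_succ j]
    have h4 : (Nat.factorial j : ℝ) ≠ 0 := by positivity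
    have h5 : ((j:ℝ) + 1) ≠ 0 := by positivity
    field_simp
    push_cast; ring

lemma raney_eq (m : ℕ) : raney 3 1 m = (Nat.choose (3 * m + 1) m : ℝ) / (3 * (m : ℝ) + 1) := by
  cases m with
  | zero => simp [raney]
  | succ m =>
    show (1 / (Nat.factorial (m + 1) : ℝ)) *
      ∏ i ∈ Finset.Icc 1 m, (((m : ℝ) + 1) * 3 + 1 - (i : ℝ)) = _
    have hre : ∏ i ∈ Finset.Icc 1 m, (((m:ℝ) + 1) * 3 + 1 - (i:ℝ))
        = ∏ k ∈ Finset.range m, (((2*m+3:ℕ):ℝ) + (m:ℝ) - (k:ℝ)) := by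
      rw [← Finset.Ico_add_one_right_eq_Icc, Finset.prod_Ico_eq_prod_range]
      refine Finset.prod_congr (by simp) fun k _ => ?_
      push_cast; ring
    rw [hre, prodRange m (2*m+3)]
    have hc : (Nat.choose (3 * (m+1) + 1) (m+1) : ℝ)
        = (Nat.factorial (3*m+4) : ℝ) / ((Nat.factorial (m+1)) * (Nat.factorial (2*m+3))) := by
      have h : (m+1) ≤ 3*(m+1)+1 := by omega
      rw [Nat.cast_choose ℝ h]
      have e1 : 3*(m+1)+1 = 3*m+4 := by omega
      have e2 : 3*m+4 - (m+1) = 2*m+3 := by omega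
      rw [e1, e2]
    rw [hc]
    have e3 : (2*m+3)+m = 3*m+3 := by omega
    rw [e3]
    have h4 : (Nat.factorial (3*m+4) : ℝ) = ((3*m+4:ℕ):ℝ) * (Nat.factorial (3*m+3)) := by
      rw [show (3*m+4) = (3*m+3)+1 by omega, Nat.factorial_succ]; push_cast; ring
    rw [h4]
    have p1 : (Nat.factorial (m+1) : ℝ) ≠ 0 := by positivity
    have p2 : (Nat.factorial (2*m+3) : ℝ) ≠ 0 := by positivity
    have p3 : (Nat.factorial (3*m+3) : ℝ) ≠ 0 := by positivity
    have p4 : (3 * ((m:ℝ)+1) + 1) ≠ 0 := by positivity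
    have p5 : ((3*m+4:ℕ):ℝ) ≠ 0 := by positivity
    push_cast
    field_simp
    ring

lemma GammaShift (c : ℝ) (hc : 0 < c) : ∀ m : ℕ, Real.Gamma ((m:ℝ) + c)
    = (∏ k ∈ Finset.range m, ((k:ℝ) + c)) * Real.Gamma c := by
  intro m
  induction m with
  | zero => simp
  | succ m ih =>
    have h1 : ((m+1:ℕ):ℝ) + c = ((m:ℝ) + c) + 1 := by push_cast; ring
    have h2 : (m:ℝ) + c ≠ 0 := by positivity
    rw [h1, Real.Gamma_add_one h2, ih, Finset.prod_range_succ]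
    ring

lemma refl13 : Real.Gamma (1/3) * Real.Gamma (2/3) = 2 * π / Real.sqrt 3 := by
  have h := Real.Gamma_mul_Gamma_one_sub (1/3)
  have h2 : (1:ℝ) - 1/3 = 2/3 := by norm_num
  have h3 : π * (1/3) = π/3 := by ring
  rw [h2, h3, Real.sin_pi_div_three] at h
  rw [h]
  have : Real.sqrt 3 ≠ 0 := by positivity
  field_simp

lemma fact3 : ∀ m : ℕ, (27:ℝ)^m * ((∏ k ∈ Finset.range m, ((k:ℝ) + 1/3)) *
    (∏ k ∈ Finset.range m, ((k:ℝ) + 2/3))) * (Nat.factorial m : ℝ)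
    = (Nat.factorial (3*m) : ℝ) := by
  intro m
  induction m with
  | zero => simp
  | succ m ih =>
    rw [show 3*(m+1) = 3*m+1+1+1 by omega, Nat.factorial_succ, Nat.factorial_succ,
      Nat.factorial_succ, Finset.prod_range_succ, Finset.prod_range_succ, Nat.factorial_succ,
      pow_succ]
    push_cast
    linear_combination (27*((m:ℝ)+1/3)*((m:ℝ)+2/3)*((m:ℝ)+1)) * ih

lemma finalVal (m : ℕ) : (27:ℝ)^(m+1)/(6*Real.sqrt 3*π) *
    (Real.Gamma ((m:ℝ)+1/3) * Real.Gamma ((m:ℝ)+2/3) / Real.Gamma (2*(m:ℝ)+1)) / (3*(2*(m:ℝ)+1))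
    = (Nat.choose (3*m+1) m : ℝ) / (3*(m:ℝ)+1) := by
  have hG : Real.Gamma (2*(m:ℝ)+1) = (Nat.factorial (2*m) : ℝ) := by
    have : (2*(m:ℝ)+1) = ((2*m:ℕ):ℝ) + 1 := by push_cast; ring
    rw [this, Real.Gamma_nat_eq_factorial]
  rw [hG, GammaShift (1/3) (by norm_num), GammaShift (2/3) (by norm_num)]
  have hc : (Nat.choose (3*m+1) m : ℝ)
      = (3*(m:ℝ)+1) * (Nat.factorial (3*m)) / ((Nat.factorial m) * ((2*(m:ℝ)+1) * (Nat.factorial (2*m)))) := by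
    rw [Nat.cast_choose ℝ (by omega : m ≤ 3*m+1), show (3*m+1) - m = 2*m+1 by omega,
      Nat.factorial_succ (3*m), Nat.factorial_succ (2*m)]
    push_cast; ring_nf
  rw [hc]
  set P1 := ∏ k ∈ Finset.range m, ((k:ℝ) + 1/3)
  set P2 := ∏ k ∈ Finset.range m, ((k:ℝ) + 2/3)
  have p1 : (Nat.factorial m : ℝ) ≠ 0 := by positivity
  have p27 : ((27:ℝ)^m) ≠ 0 := by positivity
  have hP : P1 * P2 = (Nat.factorial (3*m):ℝ)/((27:ℝ)^m * (Nat.factorial m)) := by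
    field_simp
    linear_combination fact3 m
  have hgroup : P1 * Real.Gamma (1/3) * (P2 * Real.Gamma (2/3))
      = (P1*P2) * (Real.Gamma (1/3) * Real.Gamma (2/3)) := by ring
  rw [hgroup, hP, refl13]
  have hs3 : Real.sqrt 3 * Real.sqrt 3 = 3 := Real.mul_self_sqrt (by norm_num)
  have p3 : (0:ℝ) < π := Real.pi_pos
  have p4 : Real.sqrt 3 > 0 := by positivity
  have p2 : (Nat.factorial (2*m) : ℝ) ≠ 0 := by positivity
  have p5 : (3*(m:ℝ)+1) ≠ 0 := by positivity
  have p6 : (2*(m:ℝ)+1) ≠ 0 := by positivity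
  rw [pow_succ]
  field_simp
  ring_nf
  rw [Real.sq_sqrt (by norm_num : (0:ℝ) ≤ 3)]
  ring


lemma gInt (m : ℕ) :
    ∫ w in Set.Ioo (0:ℝ) 1, (1-2*w) * (w ^ ((m:ℝ)-2/3) * (1-w) ^ ((m:ℝ)-1/3)
        - w ^ ((m:ℝ)-1/3) * (1-w) ^ ((m:ℝ)-2/3))
    = 2 * (Real.Gamma ((m:ℝ)+1/3) * Real.Gamma ((m:ℝ)+2/3) / Real.Gamma (2*(m:ℝ)+1))
        / (3*(2*(m:ℝ)+1)) := by
  set A : ℝ := (m:ℝ) - 2/3 with hA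
  set B : ℝ := (m:ℝ) - 1/3 with hB
  have hm0 : (0:ℝ) ≤ (m:ℝ) := Nat.cast_nonneg m
  have hA1 : (0:ℝ) < A + 1 := by rw [hA]; linarith
  have hB1 : (0:ℝ) < B + 1 := by rw [hB]; linarith
  have hA2 : (0:ℝ) < A + 2 := by linarith
  have hB2 : (0:ℝ) < B + 2 := by linarith
  have i1 := betaIntegrable hA1 hB1
  have i2 := betaIntegrable hB1 hA1
  have i3 := betaIntegrable hA2 hB1
  have i4 := betaIntegrable hB2 hA1
  have key : ∀ w ∈ Set.Ioo (0:ℝ) 1,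
      (1-2*w) * (w ^ A * (1-w) ^ B - w ^ B * (1-w) ^ A)
      = (w ^ (A+1-1) * (1-w) ^ (B+1-1) - w ^ (B+1-1) * (1-w) ^ (A+1-1))
        - (2 * (w ^ (A+2-1) * (1-w) ^ (B+1-1)) - 2 * (w ^ (B+2-1) * (1-w) ^ (A+1-1))) := by
    intro w hw
    have hw0 : (0:ℝ) < w := hw.1
    have e1 : A + 1 - 1 = A := by ring
    have e2 : B + 1 - 1 = B := by ring
    have e3 : A + 2 - 1 = A + 1 := by ring
    have e4 : B + 2 - 1 = B + 1 := by ring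
    rw [e1, e2, e3, e4, Real.rpow_add hw0 A 1, Real.rpow_add hw0 B 1, Real.rpow_one]
    ring
  rw [setIntegral_congr_fun measurableSet_Ioo key]
  have i3' : IntegrableOn (fun w : ℝ => 2 * (w ^ (A+2-1) * (1-w) ^ (B+1-1))) (Set.Ioo (0:ℝ) 1) :=
    i3.const_mul 2
  have i4' : IntegrableOn (fun w : ℝ => 2 * (w ^ (B+2-1) * (1-w) ^ (A+1-1))) (Set.Ioo (0:ℝ) 1) :=
    i4.const_mul 2
  have i12 : IntegrableOn (fun w : ℝ => w ^ (A+1-1) * (1-w) ^ (B+1-1)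
      - w ^ (B+1-1) * (1-w) ^ (A+1-1)) (Set.Ioo (0:ℝ) 1) := i1.sub i2
  have i34 : IntegrableOn (fun w : ℝ => 2 * (w ^ (A+2-1) * (1-w) ^ (B+1-1))
      - 2 * (w ^ (B+2-1) * (1-w) ^ (A+1-1))) (Set.Ioo (0:ℝ) 1) := i3'.sub i4'
  rw [integral_sub i12 i34, integral_sub i1 i2, integral_sub i3' i4',
    MeasureTheory.integral_const_mul, MeasureTheory.integral_const_mul]
  rw [betaReal hA1 hB1, betaReal hB1 hA1, betaReal hA2 hB1, betaReal hB2 hA1]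
  have g1 : Real.Gamma (A+2) = (A+1) * Real.Gamma (A+1) := by
    rw [show A+2 = (A+1)+1 by ring, Real.Gamma_add_one hA1.ne']
  have g2 : Real.Gamma (B+2) = (B+1) * Real.Gamma (B+1) := by
    rw [show B+2 = (B+1)+1 by ring, Real.Gamma_add_one hB1.ne']
  have hS : A + 1 + (B+1) = 2*(m:ℝ)+1 := by rw [hA, hB]; ring
  have hS2 : (0:ℝ) < 2*(m:ℝ)+1 := by positivity
  have g3 : Real.Gamma (A+2+(B+1)) = (2*(m:ℝ)+1) * Real.Gamma (2*(m:ℝ)+1) := by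
    rw [show A+2+(B+1) = (2*(m:ℝ)+1)+1 by rw [hA, hB]; ring, Real.Gamma_add_one hS2.ne']
  have g4 : Real.Gamma (B+2+(A+1)) = (2*(m:ℝ)+1) * Real.Gamma (2*(m:ℝ)+1) := by
    rw [show B+2+(A+1) = (2*(m:ℝ)+1)+1 by rw [hA, hB]; ring, Real.Gamma_add_one hS2.ne']
  have hBA : B + 1 + (A+1) = 2*(m:ℝ)+1 := by rw [hA, hB]; ring
  rw [g1, g2, g3, g4, hS, hBA]
  have hA13 : A + 1 = (m:ℝ) + 1/3 := by rw [hA]; ring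
  have hB13 : B + 1 = (m:ℝ) + 2/3 := by rw [hB]; ring
  rw [hA13, hB13]
  have hG : Real.Gamma (2*(m:ℝ)+1) ≠ 0 := (Real.Gamma_pos_of_pos hS2).ne'
  field_simp
  ring

lemma L1 (m : ℕ) : ∀ w ∈ Set.Ioo (0:ℝ) (1/2),
    |27 - 54*w| * ((27*w*(1-w)) ^ m * ((3 * (1 + Real.sqrt (1 - 4 * (27*w*(1-w)) / 27)) ^ ((2 : ℝ) / 3) -
            (2 : ℝ) ^ ((2 : ℝ) / 3) * (27*w*(1-w)) ^ ((1 : ℝ) / 3)) /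
          ((2 : ℝ) ^ ((4 : ℝ) / 3) * (3 : ℝ) ^ ((1 : ℝ) / 2) * π * (27*w*(1-w)) ^ ((2 : ℝ) / 3) *
            (1 + Real.sqrt (1 - 4 * (27*w*(1-w)) / 27)) ^ ((1 : ℝ) / 3))))
    = (27:ℝ)^(m+1)/(6*Real.sqrt 3*π) * ((1-2*w) * (w ^ ((m:ℝ)-2/3) * (1-w) ^ ((m:ℝ)-1/3)
        - w ^ ((m:ℝ)-1/3) * (1-w) ^ ((m:ℝ)-2/3))) := by
  intro w hw
  obtain ⟨hw0, hw2⟩ := hw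
  have hw1 : (0:ℝ) < 1 - w := by linarith
  have h12 : (0:ℝ) < 1 - 2*w := by linarith
  have hsq : Real.sqrt (1 - 4 * (27*w*(1-w)) / 27) = 1 - 2*w := by
    rw [show 1 - 4 * (27*w*(1-w)) / 27 = (1-2*w)^2 by ring]
    exact Real.sqrt_sq (by linarith)
  rw [hsq, show 1 + (1 - 2*w) = 2*(1-w) by ring]
  have h27a : (27:ℝ) ^ ((1:ℝ)/3) = 3 := by
    rw [show (27:ℝ) = 3^(3:ℕ) by norm_num, ← Real.rpow_natCast (3:ℝ) 3,
      ← Real.rpow_mul (by norm_num : (0:ℝ) ≤ 3)]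
    norm_num
  have h27b : (27:ℝ) ^ ((2:ℝ)/3) = 9 := by
    rw [show (27:ℝ) = 3^(3:ℕ) by norm_num, ← Real.rpow_natCast (3:ℝ) 3,
      ← Real.rpow_mul (by norm_num : (0:ℝ) ≤ 3)]
    norm_num
  have hx1 : (27*w*(1-w)) ^ ((1:ℝ)/3) = 3 * (w ^ ((1:ℝ)/3) * (1-w) ^ ((1:ℝ)/3)) := by
    rw [show (27*w*(1-w)) = 27*(w*(1-w)) by ring,
      Real.mul_rpow (by norm_num) (by positivity), Real.mul_rpow hw0.le hw1.le, h27a]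
  have hx2 : (27*w*(1-w)) ^ ((2:ℝ)/3) = 9 * (w ^ ((2:ℝ)/3) * (1-w) ^ ((2:ℝ)/3)) := by
    rw [show (27*w*(1-w)) = 27*(w*(1-w)) by ring,
      Real.mul_rpow (by norm_num) (by positivity), Real.mul_rpow hw0.le hw1.le, h27b]
  have hxm : (27*w*(1-w)) ^ m = 27^m * (w^m * (1-w)^m) := by
    rw [mul_pow, mul_pow]; ring
  have h2a : (2*(1-w)) ^ ((2:ℝ)/3) = (2:ℝ) ^ ((2:ℝ)/3) * (1-w) ^ ((2:ℝ)/3) :=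
    Real.mul_rpow (by norm_num) hw1.le
  have h2b : (2*(1-w)) ^ ((1:ℝ)/3) = (2:ℝ) ^ ((1:ℝ)/3) * (1-w) ^ ((1:ℝ)/3) :=
    Real.mul_rpow (by norm_num) hw1.le
  have h32 : (3:ℝ) ^ ((1:ℝ)/2) = Real.sqrt 3 := (Real.sqrt_eq_rpow 3).symm
  have ha2 : w ^ ((2:ℝ)/3) = (w ^ ((1:ℝ)/3))^2 := by
    rw [← Real.rpow_natCast (w ^ ((1:ℝ)/3)) 2, ← Real.rpow_mul hw0.le]; norm_num
  have hb2 : (1-w) ^ ((2:ℝ)/3) = ((1-w) ^ ((1:ℝ)/3))^2 := by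
    rw [← Real.rpow_natCast ((1-w) ^ ((1:ℝ)/3)) 2, ← Real.rpow_mul hw1.le]; norm_num
  have hc2 : (2:ℝ) ^ ((2:ℝ)/3) = ((2:ℝ) ^ ((1:ℝ)/3))^2 := by
    rw [← Real.rpow_natCast ((2:ℝ) ^ ((1:ℝ)/3)) 2, ← Real.rpow_mul (by norm_num : (0:ℝ) ≤ 2)]
    norm_num
  have hc4 : (2:ℝ) ^ ((4:ℝ)/3) = 2 * (2:ℝ) ^ ((1:ℝ)/3) := by
    rw [show (4:ℝ)/3 = 1 + (1:ℝ)/3 by norm_num, Real.rpow_add (by norm_num), Real.rpow_one]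
  have hrA : w ^ ((m:ℝ)-2/3) = w^m / (w ^ ((1:ℝ)/3))^2 := by
    rw [show (m:ℝ)-2/3 = (m:ℝ) - (2:ℝ)/3 by norm_num, Real.rpow_sub hw0,
      Real.rpow_natCast, ha2]
  have hrB : w ^ ((m:ℝ)-1/3) = w^m / w ^ ((1:ℝ)/3) := by
    rw [show (m:ℝ)-1/3 = (m:ℝ) - (1:ℝ)/3 by norm_num, Real.rpow_sub hw0, Real.rpow_natCast]
  have hrC : (1-w) ^ ((m:ℝ)-2/3) = (1-w)^m / ((1-w) ^ ((1:ℝ)/3))^2 := by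
    rw [show (m:ℝ)-2/3 = (m:ℝ) - (2:ℝ)/3 by norm_num, Real.rpow_sub hw1,
      Real.rpow_natCast, hb2]
  have hrD : (1-w) ^ ((m:ℝ)-1/3) = (1-w)^m / (1-w) ^ ((1:ℝ)/3) := by
    rw [show (m:ℝ)-1/3 = (m:ℝ) - (1:ℝ)/3 by norm_num, Real.rpow_sub hw1, Real.rpow_natCast]
  rw [hx1, hx2, hxm, h2a, h2b, h32, ha2, hb2, hc2, hc4, hrA, hrB, hrC, hrD,
    abs_of_pos (by linarith : (0:ℝ) < 27 - 54*w)]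
  have hA : (0:ℝ) < w ^ ((1:ℝ)/3) := Real.rpow_pos_of_pos hw0 _
  have hB : (0:ℝ) < (1-w) ^ ((1:ℝ)/3) := Real.rpow_pos_of_pos hw1 _
  have hC : (0:ℝ) < (2:ℝ) ^ ((1:ℝ)/3) := Real.rpow_pos_of_pos (by norm_num) _
  have hS : (0:ℝ) < Real.sqrt 3 := by positivity
  have hP : (0:ℝ) < π := Real.pi_pos
  set a := w ^ ((1:ℝ)/3)
  set b := (1-w) ^ ((1:ℝ)/3)
  set c := (2:ℝ) ^ ((1:ℝ)/3)
  rw [pow_succ]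
  field_simp
  ring

lemma himg1 : (fun w : ℝ => 27*w*(1-w)) '' Set.Ioo 0 (1/2) = Set.Ioo 0 (27/4) := by
  ext y
  constructor
  · rintro ⟨w, ⟨h0, h2⟩, rfl⟩
    simp only
    constructor
    · nlinarith
    · nlinarith [sq_nonneg (1-2*w)]
  · rintro ⟨hy0, hy1⟩
    have harg0 : (0:ℝ) < 1 - 4*y/27 := by linarith
    have harg1 : 1 - 4*y/27 < 1 := by linarith
    set s := Real.sqrt (1 - 4*y/27) with hs
    have hs0 : 0 < s := Real.sqrt_pos.mpr harg0
    have hss : s^2 = 1 - 4*y/27 := Real.sq_sqrt harg0.le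
    have hs1 : s < 1 := by nlinarith [hss, hs0, hy0]
    refine ⟨(1-s)/2, ⟨by linarith, by linarith⟩, ?_⟩
    simp only
    nlinarith [hss]

lemma himg2 : (fun w : ℝ => 27*w*(1-w)) '' Set.Ioo (1/2) 1 = Set.Ioo 0 (27/4) := by
  ext y
  constructor
  · rintro ⟨w, ⟨h0, h2⟩, rfl⟩
    simp only
    constructor
    · nlinarith
    · nlinarith [sq_nonneg (1-2*w)]
  · rintro ⟨hy0, hy1⟩
    have harg0 : (0:ℝ) < 1 - 4*y/27 := by linarith
    have harg1 : 1 - 4*y/27 < 1 := by linarith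
    set s := Real.sqrt (1 - 4*y/27) with hs
    have hs0 : 0 < s := Real.sqrt_pos.mpr harg0
    have hss : s^2 = 1 - 4*y/27 := Real.sq_sqrt harg0.le
    have hs1 : s < 1 := by nlinarith [hss, hs0, hy0]
    refine ⟨(1+s)/2, ⟨by linarith, by linarith⟩, ?_⟩
    simp only
    nlinarith [hss]

lemma hinj1 : Set.InjOn (fun w : ℝ => 27*w*(1-w)) (Set.Ioo 0 (1/2)) := by
  rintro a ⟨ha0, ha2⟩ b ⟨hb0, hb2⟩ h
  simp only at h
  have h2 : (a - b) * (1 - a - b) = 0 := by nlinarith [h]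
  rcases mul_eq_zero.mp h2 with h3 | h3
  · linarith
  · linarith

lemma hinj2 : Set.InjOn (fun w : ℝ => 27*w*(1-w)) (Set.Ioo (1/2:ℝ) 1) := by
  rintro a ⟨ha0, ha2⟩ b ⟨hb0, hb2⟩ h
  simp only at h
  have h2 : (a - b) * (1 - a - b) = 0 := by nlinarith [h]
  rcases mul_eq_zero.mp h2 with h3 | h3
  · linarith
  · linarith

lemma hderiv (s : Set ℝ) : ∀ w ∈ s, HasDerivWithinAt (fun w : ℝ => 27*w*(1-w)) (27 - 54*w) s w := by
  intro w _
  have h1 : HasDerivAt (fun w : ℝ => 27*w*(1-w)) (27*(1-w) + 27*w*(-1)) w := by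
    have ha : HasDerivAt (fun w : ℝ => 27*w) 27 w := by
      simpa using (hasDerivAt_id w).const_mul (27:ℝ)
    have hb : HasDerivAt (fun w : ℝ => 1-w) (-1) w := by
      simpa using (hasDerivAt_id w).const_sub (1:ℝ)
    exact ha.mul hb
  have : (27*(1-w) + 27*w*(-1)) = 27 - 54*w := by ring
  rw [this] at h1
  exact h1.hasDerivWithinAt

lemma betaIntegrable' {a b : ℝ} (ha : -1 < a) (hb : -1 < b) :
    IntegrableOn (fun w => w ^ a * (1-w) ^ b) (Set.Ioo (0:ℝ) 1) := by
  have := betaIntegrable (p := a+1) (q := b+1) (by linarith) (by linarith)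
  simpa using this

lemma gIntegrable (m : ℕ) : IntegrableOn (fun w : ℝ => (1-2*w) * (w ^ ((m:ℝ)-2/3) * (1-w) ^ ((m:ℝ)-1/3)
    - w ^ ((m:ℝ)-1/3) * (1-w) ^ ((m:ℝ)-2/3))) (Set.Ioo (0:ℝ) 1) := by
  have hm0 : (0:ℝ) ≤ (m:ℝ) := Nat.cast_nonneg m
  have i1 := betaIntegrable' (a := (m:ℝ)-2/3) (b := (m:ℝ)-1/3) (by linarith) (by linarith)
  have i2 := betaIntegrable' (a := (m:ℝ)-1/3) (b := (m:ℝ)-2/3) (by linarith) (by linarith)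
  have i3 := betaIntegrable' (a := (m:ℝ)+1/3) (b := (m:ℝ)-1/3) (by linarith) (by linarith)
  have i4 := betaIntegrable' (a := (m:ℝ)+2/3) (b := (m:ℝ)-2/3) (by linarith) (by linarith)
  have icomb : IntegrableOn (fun w : ℝ =>
      (w ^ ((m:ℝ)-2/3) * (1-w) ^ ((m:ℝ)-1/3) - w ^ ((m:ℝ)-1/3) * (1-w) ^ ((m:ℝ)-2/3))
      - (2 * (w ^ ((m:ℝ)+1/3) * (1-w) ^ ((m:ℝ)-1/3)) - 2 * (w ^ ((m:ℝ)+2/3) * (1-w) ^ ((m:ℝ)-2/3))))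
      (Set.Ioo (0:ℝ) 1) := (i1.sub i2).sub ((i3.const_mul 2).sub (i4.const_mul 2))
  refine icomb.congr_fun ?_ measurableSet_Ioo
  intro w hw
  have hw0 : (0:ℝ) < w := hw.1
  have e1 : w ^ ((m:ℝ)+1/3) = w ^ ((m:ℝ)-2/3) * w := by
    rw [show (m:ℝ)+1/3 = ((m:ℝ)-2/3) + 1 by ring, Real.rpow_add hw0, Real.rpow_one]
  have e2 : w ^ ((m:ℝ)+2/3) = w ^ ((m:ℝ)-1/3) * w := by
    rw [show (m:ℝ)+2/3 = ((m:ℝ)-1/3) + 1 by ring, Real.rpow_add hw0, Real.rpow_one]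
  simp only [e1, e2]
  ring

lemma L2 (m : ℕ) : ∀ w ∈ Set.Ioo ((1:ℝ)/2) 1,
    |27 - 54*w| * ((27*w*(1-w)) ^ m * ((3 * (1 + Real.sqrt (1 - 4 * (27*w*(1-w)) / 27)) ^ ((2 : ℝ) / 3) -
            (2 : ℝ) ^ ((2 : ℝ) / 3) * (27*w*(1-w)) ^ ((1 : ℝ) / 3)) /
          ((2 : ℝ) ^ ((4 : ℝ) / 3) * (3 : ℝ) ^ ((1 : ℝ) / 2) * π * (27*w*(1-w)) ^ ((2 : ℝ) / 3) *
            (1 + Real.sqrt (1 - 4 * (27*w*(1-w)) / 27)) ^ ((1 : ℝ) / 3))))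
    = (27:ℝ)^(m+1)/(6*Real.sqrt 3*π) * ((1-2*w) * (w ^ ((m:ℝ)-2/3) * (1-w) ^ ((m:ℝ)-1/3)
        - w ^ ((m:ℝ)-1/3) * (1-w) ^ ((m:ℝ)-2/3))) := by
  intro w hw
  have hv : (1-w) ∈ Set.Ioo (0:ℝ) (1/2) := ⟨by linarith [hw.2], by linarith [hw.1]⟩
  have h := L1 m (1-w) hv
  rw [show 27*(1-w)*(1-(1-w)) = 27*w*(1-w) by ring,
    show 27 - 54*(1-w) = -(27 - 54*w) by ring, abs_neg,
    show (1:ℝ)-(1-w) = w by ring] at h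
  rw [h]
  ring


/-- For
`W(x) = [3·(1 + √(1 − 4x/27))^(2/3) − 2^(2/3)·x^(1/3)] /
        (2^(4/3)·3^(1/2)·π·x^(2/3)·(1 + √(1 − 4x/27))^(1/3))`
on `(0, 27/4)`: `W ≥ 0` there, and
`∫₀^{27/4} x^m·W(x) dx = A_m(3,1) = C(3m+1, m)/(3m+1)`. -/
theorem stmt_14 :
    (∀ x ∈ Set.Ioo (0 : ℝ) (27 / 4),
      0 ≤ (3 * (1 + Real.sqrt (1 - 4 * x / 27)) ^ ((2 : ℝ) / 3) -
            (2 : ℝ) ^ ((2 : ℝ) / 3) * x ^ ((1 : ℝ) / 3)) /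
          ((2 : ℝ) ^ ((4 : ℝ) / 3) * (3 : ℝ) ^ ((1 : ℝ) / 2) * π * x ^ ((2 : ℝ) / 3) *
            (1 + Real.sqrt (1 - 4 * x / 27)) ^ ((1 : ℝ) / 3))) ∧
    ∀ m : ℕ,
      (∫ x in (0:ℝ)..(27 / 4),
        x ^ m * ((3 * (1 + Real.sqrt (1 - 4 * x / 27)) ^ ((2 : ℝ) / 3) -
            (2 : ℝ) ^ ((2 : ℝ) / 3) * x ^ ((1 : ℝ) / 3)) /
          ((2 : ℝ) ^ ((4 : ℝ) / 3) * (3 : ℝ) ^ ((1 : ℝ) / 2) * π * x ^ ((2 : ℝ) / 3) *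
            (1 + Real.sqrt (1 - 4 * x / 27)) ^ ((1 : ℝ) / 3))))
      = raney 3 1 m ∧
      raney 3 1 m = (Nat.choose (3 * m + 1) m : ℝ) / (3 * (m : ℝ) + 1) := by
  constructor
  · -- nonnegativity
    rintro x ⟨hx0, hx1⟩
    have hs : (0:ℝ) ≤ Real.sqrt (1 - 4 * x / 27) := Real.sqrt_nonneg _
    have hden : (0:ℝ) < (2 : ℝ) ^ ((4 : ℝ) / 3) * (3 : ℝ) ^ ((1 : ℝ) / 2) * π * x ^ ((2 : ℝ) / 3) *
        (1 + Real.sqrt (1 - 4 * x / 27)) ^ ((1 : ℝ) / 3) := by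
      have h1 : (0:ℝ) < (2 : ℝ) ^ ((4 : ℝ) / 3) := Real.rpow_pos_of_pos (by norm_num) _
      have h2 : (0:ℝ) < (3 : ℝ) ^ ((1 : ℝ) / 2) := Real.rpow_pos_of_pos (by norm_num) _
      have h3 : (0:ℝ) < x ^ ((2 : ℝ) / 3) := Real.rpow_pos_of_pos hx0 _
      have h4 : (0:ℝ) < (1 + Real.sqrt (1 - 4 * x / 27)) ^ ((1 : ℝ) / 3) :=
        Real.rpow_pos_of_pos (by linarith) _
      have h5 : (0:ℝ) < π := Real.pi_pos
      positivity
    have hnum : (0:ℝ) ≤ 3 * (1 + Real.sqrt (1 - 4 * x / 27)) ^ ((2 : ℝ) / 3) -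
        (2 : ℝ) ^ ((2 : ℝ) / 3) * x ^ ((1 : ℝ) / 3) := by
      have h1 : (1:ℝ) ≤ (1 + Real.sqrt (1 - 4 * x / 27)) ^ ((2 : ℝ) / 3) := by
        have h := Real.rpow_le_rpow (by norm_num : (0:ℝ) ≤ 1) (by linarith :
          (1:ℝ) ≤ 1 + Real.sqrt (1 - 4 * x / 27)) (by norm_num : (0:ℝ) ≤ (2:ℝ)/3)
        rwa [Real.one_rpow] at h
      have h24 : (2:ℝ) ^ ((2:ℝ)/3) = (4:ℝ) ^ ((1:ℝ)/3) := by
        rw [show (4:ℝ) = 2^(2:ℕ) by norm_num, ← Real.rpow_natCast (2:ℝ) 2,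
          ← Real.rpow_mul (by norm_num : (0:ℝ) ≤ 2)]
        norm_num
      have h2 : (2:ℝ) ^ ((2:ℝ)/3) * x ^ ((1:ℝ)/3) = (4*x) ^ ((1:ℝ)/3) := by
        rw [h24, ← Real.mul_rpow (by norm_num) hx0.le]
      have h27 : (27:ℝ) ^ ((1:ℝ)/3) = 3 := by
        rw [show (27:ℝ) = 3^(3:ℕ) by norm_num, ← Real.rpow_natCast (3:ℝ) 3,
          ← Real.rpow_mul (by norm_num : (0:ℝ) ≤ 3)]
        norm_num
      have h3 : (4*x) ^ ((1:ℝ)/3) ≤ 3 :=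
        (Real.rpow_le_rpow (by linarith) (by linarith : 4*x ≤ 27) (by norm_num)).trans_eq h27
      linarith [h1, h2, h3]
    exact div_nonneg hnum hden.le
  · intro m
    refine ⟨?_, raney_eq m⟩
    rw [raney_eq m]
    set F : ℝ → ℝ := fun x => x ^ m * ((3 * (1 + Real.sqrt (1 - 4 * x / 27)) ^ ((2 : ℝ) / 3) -
            (2 : ℝ) ^ ((2 : ℝ) / 3) * x ^ ((1 : ℝ) / 3)) /
          ((2 : ℝ) ^ ((4 : ℝ) / 3) * (3 : ℝ) ^ ((1 : ℝ) / 2) * π * x ^ ((2 : ℝ) / 3) *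
            (1 + Real.sqrt (1 - 4 * x / 27)) ^ ((1 : ℝ) / 3))) with hF
    set G : ℝ → ℝ := fun w => (27:ℝ)^(m+1)/(6*Real.sqrt 3*π) *
        ((1-2*w) * (w ^ ((m:ℝ)-2/3) * (1-w) ^ ((m:ℝ)-1/3)
          - w ^ ((m:ℝ)-1/3) * (1-w) ^ ((m:ℝ)-2/3))) with hG
    have cov1 : ∫ x in Set.Ioo (0:ℝ) (27/4), F x = ∫ w in Set.Ioo (0:ℝ) (1/2), G w := by
      rw [← himg1, integral_image_eq_integral_abs_deriv_smul measurableSet_Ioo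
        (hderiv _) hinj1 F]
      refine setIntegral_congr_fun measurableSet_Ioo fun w hw => ?_
      simp only [smul_eq_mul, hF, hG]
      exact L1 m w hw
    have cov2 : ∫ x in Set.Ioo (0:ℝ) (27/4), F x = ∫ w in Set.Ioo ((1:ℝ)/2) 1, G w := by
      rw [← himg2, integral_image_eq_integral_abs_deriv_smul measurableSet_Ioo
        (hderiv _) hinj2 F]
      refine setIntegral_congr_fun measurableSet_Ioo fun w hw => ?_
      simp only [smul_eq_mul, hF, hG]
      exact L2 m w hw
    have hGint : IntegrableOn G (Set.Ioo (0:ℝ) 1) := by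
      rw [hG]
      exact (gIntegrable m).const_mul _
    have hsplit : Set.Ioo (0:ℝ) 1 = Set.Ioc 0 (1/2) ∪ Set.Ioo (1/2) 1 := by
      ext x
      simp only [Set.mem_Ioo, Set.mem_Ioc, Set.mem_union]
      constructor
      · rintro ⟨h1, h2⟩
        rcases le_or_gt x (1/2) with h | h
        · exact Or.inl ⟨h1, h⟩
        · exact Or.inr ⟨h, h2⟩
      · rintro (⟨h1, h2⟩ | ⟨h1, h2⟩)
        · exact ⟨h1, by linarith⟩
        · exact ⟨by linarith, h2⟩
    have hdisj : Disjoint (Set.Ioc (0:ℝ) (1/2)) (Set.Ioo (1/2) 1) := by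
      rw [Set.disjoint_left]
      rintro x hx hx2
      exact absurd hx2.1 (not_lt.mpr hx.2)
    have hsum : ∫ w in Set.Ioo (0:ℝ) 1, G w
        = (∫ w in Set.Ioo (0:ℝ) (1/2), G w) + ∫ w in Set.Ioo ((1:ℝ)/2) 1, G w := by
      rw [hsplit, setIntegral_union hdisj measurableSet_Ioo
        (hGint.mono_set (by rw [hsplit]; exact Set.subset_union_left))
        (hGint.mono_set (by rw [hsplit]; exact Set.subset_union_right)),
        MeasureTheory.integral_Ioc_eq_integral_Ioo]
    have hval : ∫ w in Set.Ioo (0:ℝ) 1, G w = (27:ℝ)^(m+1)/(6*Real.sqrt 3*π) *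
        (2 * (Real.Gamma ((m:ℝ)+1/3) * Real.Gamma ((m:ℝ)+2/3) / Real.Gamma (2*(m:ℝ)+1))
          / (3*(2*(m:ℝ)+1))) := by
      rw [hG]
      rw [MeasureTheory.integral_const_mul, gInt m]
    have h2SI : (∫ x in Set.Ioo (0:ℝ) (27/4), F x) + (∫ x in Set.Ioo (0:ℝ) (27/4), F x)
        = (27:ℝ)^(m+1)/(6*Real.sqrt 3*π) *
        (2 * (Real.Gamma ((m:ℝ)+1/3) * Real.Gamma ((m:ℝ)+2/3) / Real.Gamma (2*(m:ℝ)+1))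
          / (3*(2*(m:ℝ)+1))) := by
      nth_rewrite 2 [cov2]
      rw [cov1, ← hsum, hval]
    have hSI : ∫ x in Set.Ioo (0:ℝ) (27/4), F x = (27:ℝ)^(m+1)/(6*Real.sqrt 3*π) *
        (Real.Gamma ((m:ℝ)+1/3) * Real.Gamma ((m:ℝ)+2/3) / Real.Gamma (2*(m:ℝ)+1))
          / (3*(2*(m:ℝ)+1)) := by
      have hx : (27:ℝ)^(m+1)/(6*Real.sqrt 3*π) *
          (2 * (Real.Gamma ((m:ℝ)+1/3) * Real.Gamma ((m:ℝ)+2/3) / Real.Gamma (2*(m:ℝ)+1))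
            / (3*(2*(m:ℝ)+1)))
          = 2 * ((27:ℝ)^(m+1)/(6*Real.sqrt 3*π) *
          (Real.Gamma ((m:ℝ)+1/3) * Real.Gamma ((m:ℝ)+2/3) / Real.Gamma (2*(m:ℝ)+1))
            / (3*(2*(m:ℝ)+1))) := by ring
      rw [hx] at h2SI
      linarith
    rw [intervalIntegral.integral_of_le (by norm_num : (0:ℝ) ≤ 27/4),
      MeasureTheory.integral_Ioc_eq_integral_Ioo]
    show ∫ x in Set.Ioo (0:ℝ) (27/4), F x = _
    rw [hSI, finalVal m]
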